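/- For every topological space X, |X| ≤ nu(X)^{χ(X)·wL_c(X)}. -/

import Mathlib

open Set Topology Cardinal

universe u

variable {X : Type u}

/-- The θ-closure of a set. -/
def thetaCl [TopologicalSpace X] (A : Set X) : Set X :=
  {x | ∀ U : Set X, IsOpen U → x ∈ U → (closure U ∩ A).Nonempty}

/-- The θ-closed hull of a set. -/
def thetaHull [TopologicalSpace X] (A : Set X) : Set X :=
  ⋂₀ {C : Set X | thetaCl C = C ∧ A ⊆ C}

/-- A nonempty set is finitely non-Urysohn if every finite choice of closed
neighborhoods (closures of open neighborhoods) of finitely many of its points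
has nonempty intersection. -/
def FinNonUrysohn [TopologicalSpace X] (A : Set X) : Prop :=
  A.Nonempty ∧ ∀ F : Set X, F ⊆ A → F.Nonempty → F.Finite →
    ∀ U : X → Set X, (∀ x ∈ F, IsOpen (U x) ∧ x ∈ U x) →
      (⋂ x ∈ F, closure (U x)).Nonempty

/-- The non-Urysohn number `nu(X)`. -/
noncomputable def nuNumber (X : Type u) [TopologicalSpace X] : Cardinal.{u} :=
  1 + ⨆ A : {A : Set X // FinNonUrysohn A}, #↥A.1

/-- The Urysohn number `U(X)`. -/
noncomputable def UrysohnNumber (X : Type u) [TopologicalSpace X] : Cardinal.{u} :=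
  sInf {κ : Cardinal.{u} | ∀ A : Set X, κ ≤ #↥A → ∃ U : X → Set X,
    (∀ a ∈ A, IsOpen (U a) ∧ a ∈ U a) ∧ (⋂ a ∈ A, closure (U a)) = ∅}

/-- The cardinal function `κ(X)`: the smallest infinite cardinal such that each
point has a family of at most that many closed neighborhoods cofinal (under
reverse inclusion) in the closures of its open neighborhoods. -/
noncomputable def kappaInv (X : Type u) [TopologicalSpace X] : Cardinal.{u} :=
  sInf {κ : Cardinal.{u} | ℵ₀ ≤ κ ∧ ∀ x : X, ∃ V : Set (Set X), #↥V ≤ κ ∧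
    (∀ W ∈ V, IsClosed W ∧ W ∈ nhds x) ∧
    ∀ U : Set X, IsOpen U → x ∈ U → ∃ W ∈ V, W ⊆ closure U}

/-- The character `χ(X)`. -/
noncomputable def chiChar (X : Type u) [TopologicalSpace X] : Cardinal.{u} :=
  sInf {κ : Cardinal.{u} | ℵ₀ ≤ κ ∧ ∀ x : X, ∃ B : Set (Set X), #↥B ≤ κ ∧
    (∀ U ∈ B, U ∈ nhds x) ∧ ∀ S ∈ nhds x, ∃ U ∈ B, U ⊆ S}

/-- The θ-density `d_θ(X)`. -/
noncomputable def dTheta (X : Type u) [TopologicalSpace X] : Cardinal.{u} :=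
  sInf {c : Cardinal.{u} | ∃ A : Set X, thetaCl A = Set.univ ∧ #↥A = c}

/-- The cardinal function `sL_θ(X)`. -/
noncomputable def sLtheta (X : Type u) [TopologicalSpace X] : Cardinal.{u} :=
  sInf {τ : Cardinal.{u} | ℵ₀ ≤ τ ∧ ∀ A : Set X, ∀ 𝒰 : Set (Set X),
    (∀ U ∈ 𝒰, IsOpen U) → thetaCl A ⊆ ⋃₀ 𝒰 →
    ∃ 𝒱 ⊆ 𝒰, #↥𝒱 ≤ τ ∧ A ⊆ closure (⋃₀ 𝒱)}

/-- The cardinal function `wL_c(X)`. -/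
noncomputable def wLc (X : Type u) [TopologicalSpace X] : Cardinal.{u} :=
  sInf {τ : Cardinal.{u} | ℵ₀ ≤ τ ∧ ∀ A : Set X, IsClosed A → ∀ 𝒰 : Set (Set X),
    (∀ U ∈ 𝒰, IsOpen U) → A ⊆ ⋃₀ 𝒰 →
    ∃ 𝒱 ⊆ 𝒰, #↥𝒱 ≤ τ ∧ A ⊆ closure (⋃₀ 𝒱)}

/-- The almost Lindelöf degree `aL(X)`. -/
noncomputable def aLdeg (X : Type u) [TopologicalSpace X] : Cardinal.{u} :=
  sInf {τ : Cardinal.{u} | ℵ₀ ≤ τ ∧ ∀ 𝒰 : Set (Set X),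
    (∀ U ∈ 𝒰, IsOpen U) → ⋃₀ 𝒰 = Set.univ →
    ∃ 𝒱 ⊆ 𝒰, #↥𝒱 ≤ τ ∧ (⋃ V ∈ 𝒱, closure V) = Set.univ}

/-- `X` is a Urysohn space: distinct points have open neighborhoods with
disjoint closures. -/
def UrysohnSpace (X : Type u) [TopologicalSpace X] : Prop :=
  ∀ x y : X, x ≠ y → ∃ U V : Set X, IsOpen U ∧ IsOpen V ∧ x ∈ U ∧ y ∈ V ∧
    closure U ∩ closure V = ∅

/-- For a set `S`, the intersection over all choices of closed neighborhoods of
the points of `S` of the θ-closures of the intersections of the choices. -/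
def capSet [TopologicalSpace X] (S : Set X) : Set X :=
  {y | ∀ U : X → Set X, (∀ a ∈ S, IsOpen (U a) ∧ a ∈ U a) →
    y ∈ thetaCl (⋂ a ∈ S, closure (U a))}

/-- For a set `M`, the intersection over all nonempty finite `F ⊆ M` and all
choices of open neighborhoods of points of `F` of
`cl_θ(⋂_{x∈F} closure (U x))`. -/
def fnuCap [TopologicalSpace X] (M : Set X) : Set X :=
  {y | ∀ F : Set X, F ⊆ M → F.Nonempty → F.Finite → ∀ U : X → Set X,
    (∀ x ∈ F, IsOpen (U x) ∧ x ∈ U x) →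
    y ∈ thetaCl (⋂ x ∈ F, closure (U x))}

namespace Statement10Aux

variable {X : Type u} [TopologicalSpace X]

/-- The trace of the neighborhood base of `x` on a set `S`. -/
def trc (B : X → Set (Set X)) (x : X) (S : Set X) : Set (Set X) :=
  (fun U => closure U ∩ S) '' B x

/-- The set of points whose trace on `S` equals `𝒯`. -/
def Dst (B : X → Set (Set X)) (S : Set X) (𝒯 : Set (Set X)) : Set X :=
  {x | trc B x S = 𝒯 ∧ ∅ ∉ 𝒯}

/-- Interiors of basic neighborhoods of points of `A`. -/
def basics (B : X → Set (Set X)) (A : Set X) : Set (Set X) :=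
  ⋃ y ∈ A, interior '' B y

open Classical in
/-- A choice of a point outside `closure (⋃₀ 𝒱)` when possible. -/
noncomputable def pick (x₀ : X) (𝒱 : Set (Set X)) : X :=
  if h : (closure (⋃₀ 𝒱))ᶜ.Nonempty then h.choose else x₀

theorem pick_spec (x₀ : X) {𝒱 : Set (Set X)} (h : (closure (⋃₀ 𝒱))ᶜ.Nonempty) :
    pick x₀ 𝒱 ∈ (closure (⋃₀ 𝒱))ᶜ := by
  rw [pick, dif_pos h]; exact h.choose_spec

/-- One step of the closing-off construction. -/
def step (B : X → Set (Set X)) (κ : Cardinal.{u}) (x₀ : X) (A : Set X) : Set X :=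
  A ∪ ((⋃ S : {S : Set X // S ⊆ A ∧ #S ≤ κ},
        ⋃ 𝒯 : {𝒯 : Set (Set X) // 𝒯 ⊆ 𝒫 S.1 ∧ #𝒯 ≤ κ}, Dst B S.1 𝒯.1)
    ∪ (⋃ 𝒱 : {𝒱 : Set (Set X) // 𝒱 ⊆ basics B A ∧ #𝒱 ≤ κ}, {pick x₀ 𝒱.1}))

theorem subset_step (B : X → Set (Set X)) (κ : Cardinal.{u}) (x₀ : X) (A : Set X) :
    A ⊆ step B κ x₀ A := subset_union_left

theorem Dst_subset_step (B : X → Set (Set X)) (κ : Cardinal.{u}) (x₀ : X) (A : Set X)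
    {S : Set X} {𝒯 : Set (Set X)} (hS : S ⊆ A) (hSc : #S ≤ κ)
    (h𝒯 : 𝒯 ⊆ 𝒫 S) (h𝒯c : #𝒯 ≤ κ) : Dst B S 𝒯 ⊆ step B κ x₀ A := fun x hx =>
  Or.inr (Or.inl (mem_iUnion.mpr ⟨⟨S, hS, hSc⟩, mem_iUnion.mpr ⟨⟨𝒯, h𝒯, h𝒯c⟩, hx⟩⟩))

theorem pick_mem_step (B : X → Set (Set X)) (κ : Cardinal.{u}) (x₀ : X) (A : Set X)
    {𝒱 : Set (Set X)} (h1 : 𝒱 ⊆ basics B A) (h2 : #𝒱 ≤ κ) :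
    pick x₀ 𝒱 ∈ step B κ x₀ A :=
  Or.inr (Or.inr (mem_iUnion.mpr ⟨⟨𝒱, h1, h2⟩, rfl⟩))

/-- The transfinite chain of the construction, indexed by a well-order of type `κ⁺`. -/
noncomputable def chain (B : X → Set (Set X)) (κ : Cardinal.{u}) (x₀ : X) :
    (Order.succ κ).ord.ToType → Set X :=
  WellFounded.fix wellFounded_lt
    (fun w ih => step B κ x₀ (⋃ w' : {w' // w' < w}, ih w'.1 w'.2))

theorem chain_eq (B : X → Set (Set X)) (κ : Cardinal.{u}) (x₀ : X)
    (w : (Order.succ κ).ord.ToType) :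
    chain B κ x₀ w = step B κ x₀ (⋃ w' : {w' // w' < w}, chain B κ x₀ w'.1) :=
  WellFounded.fix_eq _ _ _

/-- Fibers of the trace map are finitely non-Urysohn. -/
theorem fnu_Dst {B : X → Set (Set X)}
    (hB2 : ∀ x, ∀ U ∈ B x, U ∈ nhds x)
    (hB3 : ∀ x, ∀ S ∈ nhds x, ∃ U ∈ B x, U ⊆ S)
    (S : Set X) (𝒯 : Set (Set X)) (hne : (Dst B S 𝒯).Nonempty) :
    FinNonUrysohn (Dst B S 𝒯) := by
  refine ⟨hne, fun F hFD hFne hFfin U hU => ?_⟩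
  obtain ⟨x₀, hx₀F⟩ := hFne
  have hx₀D := hFD hx₀F
  have key : ∀ x : X, ∃ C : Set X, x ∈ F → C ∈ B x₀ ∧ closure C ∩ S ⊆ closure (U x) := by
    intro x
    by_cases hx : x ∈ F
    · have hxD := hFD hx
      have hUx : U x ∈ nhds x := (hU x hx).1.mem_nhds (hU x hx).2
      obtain ⟨B', hB'mem, hB'sub⟩ := hB3 x (U x) hUx
      have h1 : closure B' ∩ S ∈ trc B x S := ⟨B', hB'mem, rfl⟩
      rw [hxD.1, ← hx₀D.1] at h1
      obtain ⟨C, hCmem, hCeq⟩ := h1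
      refine ⟨C, fun _ => ⟨hCmem, ?_⟩⟩
      have hCeq' : closure C ∩ S = closure B' ∩ S := hCeq
      rw [hCeq']
      exact inter_subset_left.trans (closure_mono hB'sub)
    · exact ⟨univ, fun h => absurd h hx⟩
  choose C hC using key
  have hmem : (⋂ x ∈ F, C x) ∈ nhds x₀ :=
    (Filter.biInter_mem hFfin).mpr fun x hx => hB2 x₀ (C x) (hC x hx).1
  obtain ⟨B'', hB''mem, hB''sub⟩ := hB3 x₀ _ hmem
  have hT : closure B'' ∩ S ∈ 𝒯 := by
    rw [← hx₀D.1]; exact ⟨B'', hB''mem, rfl⟩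
  have hTne : (closure B'' ∩ S).Nonempty := by
    rcases eq_empty_or_nonempty (closure B'' ∩ S) with h | h
    · exact absurd (h ▸ hT) hx₀D.2
    · exact h
  obtain ⟨p, hp⟩ := hTne
  refine ⟨p, mem_iInter₂.mpr fun x hx => ?_⟩
  have hsub : closure B'' ⊆ closure (C x) :=
    closure_mono (hB''sub.trans (biInter_subset_of_mem hx))
  exact (hC x hx).2 ⟨hsub hp.1, hp.2⟩

theorem card_Dst_le {B : X → Set (Set X)}
    (hB2 : ∀ x, ∀ U ∈ B x, U ∈ nhds x)
    (hB3 : ∀ x, ∀ S ∈ nhds x, ∃ U ∈ B x, U ⊆ S)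
    (S : Set X) (𝒯 : Set (Set X)) : #(Dst B S 𝒯) ≤ nuNumber X := by
  rcases eq_empty_or_nonempty (Dst B S 𝒯) with h | h
  · rw [h]; simp
  · have hfnu := fnu_Dst hB2 hB3 S 𝒯 h
    have hb : BddAbove (Set.range fun A : {A : Set X // FinNonUrysohn A} => #A.1) := by
      refine ⟨#X, ?_⟩
      rintro c ⟨A, rfl⟩
      exact mk_set_le _
    have h1 : #(Dst B S 𝒯) ≤ ⨆ A : {A : Set X // FinNonUrysohn A}, #A.1 :=
      le_ciSup hb (⟨Dst B S 𝒯, hfnu⟩ : {A : Set X // FinNonUrysohn A})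
    exact h1.trans (self_le_add_left _ 1)

/-- Helper: cardinality of an indexed union. -/
theorem mk_iUnion_le' {Y ι : Type u} {f : ι → Set Y} (c d : Cardinal.{u})
    (h1 : #ι ≤ c) (h2 : ∀ i, #(f i) ≤ d) : #(⋃ i, f i) ≤ c * d :=
  calc #(⋃ i, f i) ≤ Cardinal.sum fun i => #(f i) := mk_iUnion_le_sum_mk
    _ ≤ Cardinal.sum fun _ : ι => d := Cardinal.sum_le_sum _ _ h2
    _ = #ι * d := Cardinal.sum_const' ι d
    _ ≤ c * d := mul_le_mul_left h1 d

theorem card_step_le {B : X → Set (Set X)} {κ ν : Cardinal.{u}} {x₀ : X} {A : Set X}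
    (hB1 : ∀ x, #(B x) ≤ κ)
    (hκ : ℵ₀ ≤ κ) (hν : 2 ≤ ν) (hA : #A ≤ ν ^ κ)
    (hD : ∀ S 𝒯, #(Dst B S 𝒯) ≤ ν) : #(step B κ x₀ A) ≤ ν ^ κ := by
  set μ := ν ^ κ with hμ
  have h2κ : (2 : Cardinal.{u}) ^ κ ≤ μ := power_le_power_right hν
  have hμinf : ℵ₀ ≤ μ := (hκ.trans (cantor κ).le).trans h2κ
  have hκμ : κ ≤ μ := ((cantor κ).le).trans h2κ
  have hνμ : ν ≤ μ := self_le_power ν (one_le_aleph0.trans hκ)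
  have hμμ : μ * μ = μ := mul_eq_self hμinf
  have hμκpow : μ ^ κ = μ := by
    rw [hμ, ← power_mul, mul_eq_self hκ]
  have hmid : #(⋃ S : {S : Set X // S ⊆ A ∧ #S ≤ κ},
      ⋃ 𝒯 : {𝒯 : Set (Set X) // 𝒯 ⊆ 𝒫 S.1 ∧ #𝒯 ≤ κ}, Dst B S.1 𝒯.1) ≤ μ := by
    have h1 : #{S : Set X // S ⊆ A ∧ #S ≤ κ} ≤ μ := by
      refine (mk_bounded_subset_le A κ).trans ?_
      calc max #A ℵ₀ ^ κ ≤ μ ^ κ := power_le_power_right (max_le hA hμinf)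
        _ = μ := hμκpow
    have h2 : ∀ S : {S : Set X // S ⊆ A ∧ #S ≤ κ},
        #(⋃ 𝒯 : {𝒯 : Set (Set X) // 𝒯 ⊆ 𝒫 S.1 ∧ #𝒯 ≤ κ}, Dst B S.1 𝒯.1) ≤ μ := by
      intro S
      have h3 : #{𝒯 : Set (Set X) // 𝒯 ⊆ 𝒫 S.1 ∧ #𝒯 ≤ κ} ≤ μ := by
        refine (mk_bounded_subset_le (𝒫 S.1) κ).trans ?_
        have h4 : #(↥(𝒫 S.1)) ≤ μ := by
          rw [mk_powerset]
          calc (2 : Cardinal.{u}) ^ #(↥S.1) ≤ 2 ^ κ :=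
                power_le_power_left two_ne_zero S.2.2
            _ ≤ μ := h2κ
        calc max #(↥(𝒫 S.1)) ℵ₀ ^ κ ≤ μ ^ κ := power_le_power_right (max_le h4 hμinf)
          _ = μ := hμκpow
      refine (mk_iUnion_le' μ ν h3 fun 𝒯 => hD S.1 𝒯.1).trans ?_
      calc μ * ν ≤ μ * μ := mul_le_mul_right hνμ μ
        _ = μ := hμμ
    refine (mk_iUnion_le' μ μ h1 h2).trans hμμ.le
  have hpk : #(⋃ 𝒱 : {𝒱 : Set (Set X) // 𝒱 ⊆ basics B A ∧ #𝒱 ≤ κ},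
      ({pick x₀ 𝒱.1} : Set X)) ≤ μ := by
    have hbas : #(basics B A) ≤ μ := by
      rw [basics, biUnion_eq_iUnion]
      refine (mk_iUnion_le' μ κ (hA.trans ?_) fun y => mk_image_le.trans (hB1 y.1)).trans ?_
      · exact le_refl μ
      · calc μ * κ ≤ μ * μ := mul_le_mul_right hκμ μ
          _ = μ := hμμ
    have h1 : #{𝒱 : Set (Set X) // 𝒱 ⊆ basics B A ∧ #𝒱 ≤ κ} ≤ μ := by
      refine (mk_bounded_subset_le (basics B A) κ).trans ?_
      calc max #(basics B A) ℵ₀ ^ κ ≤ μ ^ κ := power_le_power_right (max_le hbas hμinf)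
        _ = μ := hμκpow
    refine (mk_iUnion_le' μ 1 h1 fun 𝒱 => by simp).trans ?_
    calc μ * 1 ≤ μ * μ := mul_le_mul_right (one_le_aleph0.trans hμinf) μ
      _ = μ := hμμ
  have hfin : μ + (μ + μ) = μ := by rw [add_eq_self hμinf, add_eq_self hμinf]
  rw [step]
  refine (mk_union_le _ _).trans
    (le_trans (add_le_add hA ((mk_union_le _ _).trans (add_le_add hmid hpk))) hfin.le)

end Statement10Aux
namespace Statement10Aux

theorem bddW {κ : Cardinal.{u}} (hκ : ℵ₀ ≤ κ) {ι : Type u}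
    (f : ι → (Order.succ κ).ord.ToType) (hι : #ι ≤ κ) : ∃ b, ∀ i, f i < b := by
  haveI : IsWellOrder (Order.succ κ).ord.ToType (· < ·) := isWellOrder_lt
  have hreg := Cardinal.isRegular_succ hκ
  have h1 : #(range f) < Ordinal.cof (Ordinal.type
      ((· < ·) : (Order.succ κ).ord.ToType → (Order.succ κ).ord.ToType → Prop)) := by
    rw [Ordinal.type_toType, hreg.cof_eq]
    exact (mk_range_le.trans hι).trans_lt (Order.lt_succ κ)
  obtain ⟨b, hb⟩ := not_isCofinal_iff.mp fun hc =>
    (Order.cof_le hc).not_gt (by rw [Ordinal.cof_type] at h1; exact h1)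
  exact ⟨b, fun i => hb (f i) (mem_range_self i)⟩

theorem aux_main {X : Type u} [TopologicalSpace X] (x₀ : X) (κ ν : Cardinal.{u})
    (hκ : ℵ₀ ≤ κ) (hν : 2 ≤ ν)
    (B : X → Set (Set X)) (hB1 : ∀ x, #(B x) ≤ κ)
    (hB2 : ∀ x, ∀ U ∈ B x, U ∈ nhds x)
    (hB3 : ∀ x, ∀ S ∈ nhds x, ∃ U ∈ B x, U ⊆ S)
    (hW : ∀ A : Set X, IsClosed A → ∀ 𝒰 : Set (Set X), (∀ U ∈ 𝒰, IsOpen U) →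
      A ⊆ ⋃₀ 𝒰 → ∃ 𝒱 ⊆ 𝒰, #𝒱 ≤ κ ∧ A ⊆ closure (⋃₀ 𝒱))
    (hD : ∀ S 𝒯, #(Dst B S 𝒯) ≤ ν) : #X ≤ ν ^ κ := by
  classical
  set μ := ν ^ κ with hμdef
  have h2κ : (2 : Cardinal.{u}) ^ κ ≤ μ := power_le_power_right hν
  have hμinf : ℵ₀ ≤ μ := (hκ.trans (cantor κ).le).trans h2κ
  have hμμ : μ * μ = μ := mul_eq_self hμinf
  have hsucc : Order.succ κ ≤ μ := (Order.succ_le_of_lt (cantor κ)).trans h2κ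
  set H := ⋃ w, chain B κ x₀ w with hHdef
  have hcard : ∀ w, #(chain B κ x₀ w) ≤ μ := by
    intro w
    induction w using WellFoundedLT.induction with
    | _ w ih =>
      rw [chain_eq]
      refine card_step_le hB1 hκ hν ?_ hD
      refine (mk_iUnion_le' (f := fun w' : {w' // w' < w} => chain B κ x₀ w'.1)
        (Order.succ κ) μ ?_ fun w' => ih w'.1 w'.2).trans ?_
      · exact (mk_subtype_le _).trans
          (by rw [Cardinal.mk_toType, Cardinal.card_ord])
      · calc Order.succ κ * μ ≤ μ * μ := mul_le_mul_left hsucc μ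
          _ = μ := hμμ
  have hup : ∀ S : Set X, S ⊆ H → #S ≤ κ →
      ∃ w, S ⊆ ⋃ w' : {w' // w' < w}, chain B κ x₀ w'.1 := by
    intro S hSH hSc
    have hex : ∀ s : S, ∃ w, s.1 ∈ chain B κ x₀ w := fun s => mem_iUnion.mp (hSH s.2)
    choose g hg using hex
    obtain ⟨b, hb⟩ := bddW hκ g hSc
    exact ⟨b, fun s hs => mem_iUnion.mpr ⟨⟨g ⟨s, hs⟩, hb ⟨s, hs⟩⟩, hg ⟨s, hs⟩⟩⟩
  have hθ : ∀ x : X, (∀ U ∈ B x, (closure U ∩ H).Nonempty) → x ∈ H := by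
    intro x hx
    choose f hf using fun U : (B x) => hx U.1 U.2
    have hSH : range f ⊆ H := range_subset_iff.mpr fun U => (hf U).2
    have hSc : #(range f) ≤ κ := mk_range_le.trans (hB1 x)
    obtain ⟨w, hw⟩ := hup (range f) hSH hSc
    have hxD : x ∈ Dst B (range f) (trc B x (range f)) := by
      refine ⟨rfl, ?_⟩
      rintro ⟨U, hU, hUeq⟩
      have h0 : closure U ∩ range f = (∅ : Set X) := hUeq
      have : f ⟨U, hU⟩ ∈ closure U ∩ range f := ⟨(hf ⟨U, hU⟩).1, mem_range_self _⟩
      rw [h0] at this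
      exact this
    have hmem := Dst_subset_step B κ x₀ _ hw hSc
      (by rintro T ⟨U, hU, rfl⟩; exact inter_subset_right)
      (mk_image_le.trans (hB1 x)) hxD
    exact mem_iUnion.mpr ⟨w, (chain_eq B κ x₀ w) ▸ hmem⟩
  have hHcl : IsClosed H := by
    refine isClosed_of_closure_subset fun z hz => hθ z fun U hU => ?_
    have hzint : z ∈ interior U := mem_interior_iff_mem_nhds.mpr (hB2 z U hU)
    obtain ⟨p, hp⟩ := mem_closure_iff.mp hz (interior U) isOpen_interior hzint
    exact ⟨p, (interior_subset.trans subset_closure) hp.1, hp.2⟩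
  have hpickH : ∀ 𝒱 : Set (Set X), 𝒱 ⊆ basics B H → #𝒱 ≤ κ → pick x₀ 𝒱 ∈ H := by
    intro 𝒱 h1 h2
    have hex : ∀ V : 𝒱, ∃ y, y ∈ H ∧ V.1 ∈ interior '' B y := by
      intro V
      have := h1 V.2
      rw [basics] at this
      simpa using mem_iUnion₂.mp this
    choose y hyH hyV using hex
    obtain ⟨w, hw⟩ := hup (range y) (range_subset_iff.mpr hyH) (mk_range_le.trans h2)
    have h𝒱' : 𝒱 ⊆ basics B (⋃ w' : {w' // w' < w}, chain B κ x₀ w'.1) := by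
      intro V hV
      exact mem_iUnion₂.mpr ⟨y ⟨V, hV⟩, hw (mem_range_self _), hyV ⟨V, hV⟩⟩
    have hmem := pick_mem_step B κ x₀ _ h𝒱' h2
    exact mem_iUnion.mpr ⟨w, (chain_eq B κ x₀ w) ▸ hmem⟩
  have huniv : ∀ x : X, x ∈ H := by
    intro x
    by_contra hxH
    have hU₀ : ∃ U₀ ∈ B x, closure U₀ ∩ H = ∅ := by
      by_contra hc
      push_neg at hc
      exact hxH (hθ x hc)
    obtain ⟨U₀, hU₀m, hU₀e⟩ := hU₀
    have hyc : ∀ y : X, ∃ Wy : Set X, y ∈ H → Wy ∈ B y ∧ Wy ⊆ (closure U₀)ᶜ := by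
      intro y
      by_cases hy : y ∈ H
      · have hnin : y ∉ closure U₀ := fun h =>
          (eq_empty_iff_forall_notMem.mp hU₀e y) ⟨h, hy⟩
        have hmemn : (closure U₀)ᶜ ∈ nhds y :=
          IsOpen.mem_nhds isClosed_closure.isOpen_compl hnin
        obtain ⟨Wy, hw1, hw2⟩ := hB3 y _ hmemn
        exact ⟨Wy, fun _ => ⟨hw1, hw2⟩⟩
      · exact ⟨univ, fun h => absurd h hy⟩
    choose Bc hBc using hyc
    obtain ⟨𝒱, h𝒱sub, h𝒱c, hcov⟩ := hW H hHcl ((fun y => interior (Bc y)) '' H)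
      (by rintro V ⟨y, hy, rfl⟩; exact isOpen_interior)
      (fun y hy => mem_sUnion.mpr ⟨interior (Bc y), ⟨y, hy, rfl⟩,
        mem_interior_iff_mem_nhds.mpr (hB2 y _ (hBc y hy).1)⟩)
    have h𝒱bas : 𝒱 ⊆ basics B H := by
      intro V hV
      obtain ⟨y, hy, rfl⟩ := h𝒱sub hV
      exact mem_iUnion₂.mpr ⟨y, hy, ⟨Bc y, (hBc y hy).1, rfl⟩⟩
    have hxnot : x ∈ (closure (⋃₀ 𝒱))ᶜ := by
      intro hxcl
      have hxint : x ∈ interior U₀ := mem_interior_iff_mem_nhds.mpr (hB2 x U₀ hU₀m)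
      obtain ⟨p, hp⟩ := mem_closure_iff.mp hxcl (interior U₀) isOpen_interior hxint
      obtain ⟨V, hV𝒱, hpV⟩ := hp.2
      obtain ⟨y, hy, rfl⟩ := h𝒱sub hV𝒱
      exact (hBc y hy).2 (interior_subset hpV) ((interior_subset.trans subset_closure) hp.1)
    exact pick_spec x₀ ⟨x, hxnot⟩ (hcov (hpickH 𝒱 h𝒱bas h𝒱c))
  have hHuniv : H = Set.univ := Set.eq_univ_of_forall huniv
  have hHcard : #H ≤ μ := by
    refine (mk_iUnion_le' (Order.succ κ) μ
      (by rw [Cardinal.mk_toType, Cardinal.card_ord]) hcard).trans ?_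
    calc Order.succ κ * μ ≤ μ * μ := mul_le_mul_left hsucc μ
      _ = μ := hμμ
  rw [hHuniv] at hHcard
  rwa [Cardinal.mk_univ] at hHcard

end Statement10Aux
theorem statement10 (X : Type u) [TopologicalSpace X] :
    #X ≤ nuNumber X ^ (chiChar X * wLc X) := by
  classical
  by_cases hX : Nonempty X
  · obtain ⟨x₀⟩ := hX
    have hχne : {κ : Cardinal.{u} | ℵ₀ ≤ κ ∧ ∀ x : X, ∃ B : Set (Set X), #↥B ≤ κ ∧
        (∀ U ∈ B, U ∈ nhds x) ∧ ∀ S ∈ nhds x, ∃ U ∈ B, U ⊆ S}.Nonempty := by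
      refine ⟨ℵ₀ + #(Set X), self_le_add_right _ _, fun x => ?_⟩
      exact ⟨{U | U ∈ nhds x}, (mk_set_le _).trans (self_le_add_left _ _),
        fun U hU => hU, fun S hS => ⟨S, hS, subset_rfl⟩⟩
    have hχmem : chiChar X ∈ {κ : Cardinal.{u} | ℵ₀ ≤ κ ∧ ∀ x : X, ∃ B : Set (Set X),
        #↥B ≤ κ ∧ (∀ U ∈ B, U ∈ nhds x) ∧ ∀ S ∈ nhds x, ∃ U ∈ B, U ⊆ S} := by
      rw [chiChar]; exact csInf_mem hχne
    have hwne : {τ : Cardinal.{u} | ℵ₀ ≤ τ ∧ ∀ A : Set X, IsClosed A →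
        ∀ 𝒰 : Set (Set X), (∀ U ∈ 𝒰, IsOpen U) → A ⊆ ⋃₀ 𝒰 →
        ∃ 𝒱 ⊆ 𝒰, #↥𝒱 ≤ τ ∧ A ⊆ closure (⋃₀ 𝒱)}.Nonempty := by
      refine ⟨ℵ₀ + #(Set X), self_le_add_right _ _, fun A hA 𝒰 hop hcov => ?_⟩
      exact ⟨𝒰, subset_rfl, (mk_set_le _).trans (self_le_add_left _ _),
        hcov.trans subset_closure⟩
    have hwmem : wLc X ∈ {τ : Cardinal.{u} | ℵ₀ ≤ τ ∧ ∀ A : Set X, IsClosed A →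
        ∀ 𝒰 : Set (Set X), (∀ U ∈ 𝒰, IsOpen U) → A ⊆ ⋃₀ 𝒰 →
        ∃ 𝒱 ⊆ 𝒰, #↥𝒱 ≤ τ ∧ A ⊆ closure (⋃₀ 𝒱)} := by
      rw [wLc]; exact csInf_mem hwne
    set κ := chiChar X * wLc X with hκdef
    have hχκ : chiChar X ≤ κ := by
      calc chiChar X = chiChar X * 1 := (mul_one _).symm
        _ ≤ chiChar X * wLc X := mul_le_mul_right (one_le_aleph0.trans hwmem.1) _
    have hwκ : wLc X ≤ κ := by
      calc wLc X = 1 * wLc X := (one_mul _).symm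
        _ ≤ chiChar X * wLc X := mul_le_mul_left (one_le_aleph0.trans hχmem.1) _
    have hκinf : ℵ₀ ≤ κ := hχmem.1.trans hχκ
    have hBex : ∀ x : X, ∃ B : Set (Set X), #↥B ≤ κ ∧
        (∀ U ∈ B, U ∈ nhds x) ∧ ∀ S ∈ nhds x, ∃ U ∈ B, U ⊆ S := by
      intro x
      obtain ⟨B, h1, h2, h3⟩ := hχmem.2 x
      exact ⟨B, h1.trans hχκ, h2, h3⟩
    choose B hB1 hB23 using hBex
    have hB2 : ∀ x, ∀ U ∈ B x, U ∈ nhds x := fun x => (hB23 x).1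
    have hB3 : ∀ x, ∀ S ∈ nhds x, ∃ U ∈ B x, U ⊆ S := fun x => (hB23 x).2
    have hW : ∀ A : Set X, IsClosed A → ∀ 𝒰 : Set (Set X), (∀ U ∈ 𝒰, IsOpen U) →
        A ⊆ ⋃₀ 𝒰 → ∃ 𝒱 ⊆ 𝒰, #↥𝒱 ≤ κ ∧ A ⊆ closure (⋃₀ 𝒱) := by
      intro A hA 𝒰 h1 h2
      obtain ⟨𝒱, a, b, c⟩ := hwmem.2 A hA 𝒰 h1 h2
      exact ⟨𝒱, a, b.trans hwκ, c⟩
    have hν : 2 ≤ nuNumber X := by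
      have hfnu : FinNonUrysohn ({x₀} : Set X) := by
        refine ⟨singleton_nonempty x₀, fun F hF hFne hFfin U hU => ?_⟩
        obtain ⟨z, hz⟩ := hFne
        refine ⟨z, mem_iInter₂.mpr fun w hw => ?_⟩
        have hwz : w = z := (hF hw).trans (hF hz).symm
        rw [hwz]
        exact subset_closure (hU z hz).2
      have hb : BddAbove (Set.range fun A : {A : Set X // FinNonUrysohn A} => #↥A.1) :=
        ⟨#X, by rintro c ⟨A, rfl⟩; exact mk_set_le _⟩
      have h1 : (1 : Cardinal.{u}) ≤ ⨆ A : {A : Set X // FinNonUrysohn A}, #↥A.1 := by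
        calc (1 : Cardinal.{u}) = #↥({x₀} : Set X) := (mk_singleton x₀).symm
          _ ≤ _ := le_ciSup hb (⟨{x₀}, hfnu⟩ : {A : Set X // FinNonUrysohn A})
      calc (2 : Cardinal.{u}) = 1 + 1 := by norm_num
        _ ≤ 1 + ⨆ A : {A : Set X // FinNonUrysohn A}, #↥A.1 := add_le_add_right h1 1
        _ = nuNumber X := rfl
    exact Statement10Aux.aux_main x₀ κ (nuNumber X) hκinf hν B hB1 hB2 hB3 hW
      (fun S 𝒯 => Statement10Aux.card_Dst_le hB2 hB3 S 𝒯)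
  · haveI := not_nonempty_iff.mp hX
    rw [Cardinal.mk_eq_zero X]
    exact Cardinal.zero_le _
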